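/- Let d ≥ 1, p ≥ 0, k ≥ 0, and let I_n = [x_n, x_{n+1}] with h_n := x_{n+1} − x_n > 0. Let v : I_n → ℝ^d have all components polynomial of degree ≤ p+1 and suppose ∫_{I_n} v(x) · φ(x) dx = 0 for every ℝ^d-valued φ whose components are polynomials of degree ≤ p−1. Then the k-th spatial derivative of v satisfies ‖∂ₓᵏ v‖_{L∞(I_n)} ≤ 2^{k−1} h_n^{−k} ( ‖l_p^{(k)}‖_{L∞(−1,1)} + ‖l_{p+1}^{(k)}‖_{L∞(−1,1)} ) ( |v(x_n)| + |v(x_{n+1})| ), where |·| is the Euclidean norm and l_p, l_{p+1} are the Legendre polynomials on (−1,1) normalized by l_k(1) = 1. -/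

import Mathlib

open Polynomial MeasureTheory intervalIntegral

lemma CB.contInt (f g : Polynomial ℝ) (a b : ℝ) :
    IntervalIntegrable (fun x => f.eval x * g.eval x) volume a b :=
  ((f.continuous).mul (g.continuous)).intervalIntegrable a b

lemma CB.lne (l : ℕ → Polynomial ℝ) (hnorm : ∀ k, (l k).eval 1 = 1) (m : ℕ) : l m ≠ 0 := by
  intro h
  have := hnorm m
  rw [h] at this
  simp at this

lemma CB.ortho_low (l : ℕ → Polynomial ℝ) (hdeg : ∀ k, (l k).natDegree = k)
    (horth : ∀ j k, j ≠ k → ∫ x in (-1:ℝ)..1, (l j).eval x * (l k).eval x = 0)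
    (hnorm : ∀ k, (l k).eval 1 = 1) :
    ∀ (n : ℕ) (q : Polynomial ℝ), q.natDegree ≤ n → ∀ m : ℕ, q.degree < (m : ℕ) →
      ∫ x in (-1:ℝ)..1, (l m).eval x * q.eval x = 0 := by
  intro n
  induction n with
  | zero =>
      intro q hq m hm
      obtain ⟨c, hc⟩ := Polynomial.natDegree_eq_zero.mp (Nat.le_zero.mp hq)
      rcases eq_or_ne c 0 with rfl | hc0
      · simp [← hc]
      · -- q = C c, c ≠ 0, so degree q = 0 < m, m ≠ 0
        have hm0 : m ≠ 0 := by
          rintro rfl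
          rw [← hc] at hm
          simp [Polynomial.degree_C hc0] at hm
        obtain ⟨c0, hc0'⟩ := Polynomial.natDegree_eq_zero.mp (hdeg 0)
        have hc01 : c0 = 1 := by
          have := hnorm 0
          rw [← hc0'] at this
          simpa using this
        have : ∫ x in (-1:ℝ)..1, (l m).eval x * q.eval x
            = c * ∫ x in (-1:ℝ)..1, (l m).eval x * (l 0).eval x := by
          rw [← intervalIntegral.integral_const_mul]
          congr 1
          funext x
          rw [← hc, ← hc0', hc01]
          simp
          ring
        rw [this, horth m 0 hm0, mul_zero]
  | succ n ih =>
      intro q hq m hm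
      rcases eq_or_ne q 0 with rfl | hq0
      · simp
      rcases le_or_gt q.natDegree n with h | h
      · exact ih q h m hm
      have ht : q.natDegree = n + 1 := le_antisymm hq h
      set t := q.natDegree with htdef
      have hlt : l t ≠ 0 := CB.lne l hnorm t
      set c : ℝ := q.leadingCoeff / (l t).leadingCoeff with hcdef
      have hc0 : c ≠ 0 := div_ne_zero (Polynomial.leadingCoeff_ne_zero.mpr hq0)
        (Polynomial.leadingCoeff_ne_zero.mpr hlt)
      set r : Polynomial ℝ := q - C c * l t with hrdef
      have hdegr : r.degree < q.degree := by
        apply Polynomial.degree_sub_lt _ hq0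
        · rw [Polynomial.leadingCoeff_mul, Polynomial.leadingCoeff_C, hcdef,
            div_mul_cancel₀ _ (Polynomial.leadingCoeff_ne_zero.mpr hlt)]
        · rw [Polynomial.degree_C_mul hc0, Polynomial.degree_eq_natDegree hq0,
            Polynomial.degree_eq_natDegree hlt, hdeg t]
      have hrn : r.natDegree ≤ n := by
        rcases eq_or_ne r 0 with hr0 | hr0
        · simp [hr0]
        · have : r.degree < (↑(n+1) : WithBot ℕ) := by
            rw [← ht, ← Polynomial.degree_eq_natDegree hq0]; exact hdegr
          exact Nat.lt_succ_iff.mp ((Polynomial.natDegree_lt_iff_degree_lt hr0).mpr this)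
      have hrm : r.degree < (m : ℕ) := lt_trans hdegr hm
      have htm : t ≠ m := by
        have : (t : WithBot ℕ) < (m : ℕ) := by
          rw [← Polynomial.degree_eq_natDegree hq0]; exact hm
        exact_mod_cast ne_of_lt (by exact_mod_cast this)
      have key : ∫ x in (-1:ℝ)..1, (l m).eval x * q.eval x
          = c * (∫ x in (-1:ℝ)..1, (l m).eval x * (l t).eval x)
            + ∫ x in (-1:ℝ)..1, (l m).eval x * r.eval x := by
        rw [← intervalIntegral.integral_const_mul,
          ← intervalIntegral.integral_add ((CB.contInt (l m) (l t) _ _).const_mul c)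
            (CB.contInt (l m) r _ _)]
        congr 1
        funext x
        simp [hrdef]
        ring
      rw [key, horth m t (Ne.symm htm), mul_zero, zero_add]
      exact ih r hrn m hrm

lemma CB.poly_eq_zero_of_integral_sq (r : Polynomial ℝ)
    (h : ∫ x in (-1:ℝ)..1, r.eval x * r.eval x = 0) : r = 0 := by
  by_contra hr
  have hnn : 0 ≤ᵐ[volume.restrict (Set.Ioc (-1:ℝ) 1)] fun x => r.eval x * r.eval x :=
    Filter.Eventually.of_forall fun x => mul_self_nonneg _
  have hae := (intervalIntegral.integral_eq_zero_iff_of_le_of_nonneg_ae (by norm_num) hnn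
    (CB.contInt r r _ _)).mp h
  have hmeas : MeasurableSet {x : ℝ | ¬ (r.eval x * r.eval x = 0)} := by
    have : Continuous fun x : ℝ => r.eval x * r.eval x := r.continuous.mul r.continuous
    exact (this.measurable (measurableSet_singleton (0:ℝ))).compl
  have hae' : ∀ᵐ x ∂(volume.restrict (Set.Ioc (-1:ℝ) 1)), r.eval x * r.eval x = 0 := hae
  rw [MeasureTheory.ae_iff, MeasureTheory.Measure.restrict_apply hmeas] at hae'
  have hroots : volume {x : ℝ | r.IsRoot x} = 0 :=
    (Polynomial.finite_setOf_isRoot hr).measure_zero _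
  have hsub : Set.Ioc (-1:ℝ) 1 ⊆
      {x : ℝ | r.IsRoot x} ∪ ({x : ℝ | ¬ (r.eval x * r.eval x = 0)} ∩ Set.Ioc (-1:ℝ) 1) := by
    intro x hx
    rcases eq_or_ne (r.eval x) 0 with h0 | h0
    · exact Or.inl h0
    · exact Or.inr ⟨by simp [mul_self_eq_zero, h0], hx⟩
  have h0 : volume (Set.Ioc (-1:ℝ) 1) = 0 :=
    measure_mono_null hsub (measure_union_null hroots hae')
  rw [Real.volume_Ioc] at h0
  norm_num at h0


lemma CB.decomp (l : ℕ → Polynomial ℝ) (hdeg : ∀ k, (l k).natDegree = k)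
    (horth : ∀ j k, j ≠ k → ∫ x in (-1:ℝ)..1, (l j).eval x * (l k).eval x = 0)
    (hnorm : ∀ k, (l k).eval 1 = 1) (p : ℕ) (q : Polynomial ℝ)
    (hq : q.natDegree ≤ p + 1)
    (hperp : ∀ ψ : Polynomial ℝ, ψ.degree < (p : ℕ) →
      ∫ x in (-1:ℝ)..1, q.eval x * ψ.eval x = 0) :
    ∃ a b : ℝ, q = C a * l p + C b * l (p + 1) := by
  have lcp : (l p).coeff p ≠ 0 := by
    have := Polynomial.leadingCoeff_ne_zero.mpr (CB.lne l hnorm p)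
    rwa [Polynomial.leadingCoeff, hdeg p] at this
  have lcp1 : (l (p+1)).coeff (p+1) ≠ 0 := by
    have := Polynomial.leadingCoeff_ne_zero.mpr (CB.lne l hnorm (p+1))
    rwa [Polynomial.leadingCoeff, hdeg (p+1)] at this
  set b : ℝ := q.coeff (p+1) / (l (p+1)).coeff (p+1) with hbdef
  set q1 : Polynomial ℝ := q - C b * l (p+1) with hq1def
  set a : ℝ := q1.coeff p / (l p).coeff p with hadef
  set r : Polynomial ℝ := q1 - C a * l p with hrdef
  have hrq : r = q - C b * l (p+1) - C a * l p := by rw [hrdef, hq1def]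
  have hcoeff : ∀ m : ℕ, p ≤ m → r.coeff m = 0 := by
    intro m hme
    have hrc : r.coeff m = q.coeff m - b * (l (p+1)).coeff m - a * (l p).coeff m := by
      rw [hrq]; simp [Polynomial.coeff_C_mul]
    rcases eq_or_lt_of_le hme with rfl | hm1
    · have hthis : r.coeff p = q1.coeff p - a * (l p).coeff p := by
        rw [hrdef]; simp [Polynomial.coeff_C_mul]
      rw [hthis, hadef, div_mul_cancel₀ _ lcp, sub_self]
    · have h0 : (l p).coeff m = 0 :=
        Polynomial.coeff_eq_zero_of_natDegree_lt (by rw [hdeg p]; omega)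
      by_cases hm2 : m = p + 1
      · subst hm2
        rw [hrc, h0, hbdef, div_mul_cancel₀ _ lcp1]; ring
      · have hq0 : q.coeff m = 0 := Polynomial.coeff_eq_zero_of_natDegree_lt (by omega)
        have h1 : (l (p+1)).coeff m = 0 :=
          Polynomial.coeff_eq_zero_of_natDegree_lt (by rw [hdeg (p+1)]; omega)
        rw [hrc, h0, h1, hq0]; ring
  have hrdeg : r.degree < (p : ℕ) := (Polynomial.degree_lt_iff_coeff_zero r p).mpr
    (fun m hm => hcoeff m (by exact_mod_cast hm))
  have hrnat : r.natDegree ≤ p := by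
    rcases eq_or_ne r 0 with hr0 | hr0
    · simp [hr0]
    · exact le_of_lt ((Polynomial.natDegree_lt_iff_degree_lt hr0).mpr hrdeg)
  have int1 := CB.contInt q r (-1:ℝ) 1
  have int2 := (CB.contInt (l (p+1)) r (-1:ℝ) 1).const_mul b
  have int3 := (CB.contInt (l p) r (-1:ℝ) 1).const_mul a
  have key : (∫ x in (-1:ℝ)..1, r.eval x * r.eval x)
      = (∫ x in (-1:ℝ)..1, q.eval x * r.eval x)
        - (∫ x in (-1:ℝ)..1, b * ((l (p+1)).eval x * r.eval x))
        - (∫ x in (-1:ℝ)..1, a * ((l p).eval x * r.eval x)) := by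
    rw [← intervalIntegral.integral_sub int1 int2,
      ← intervalIntegral.integral_sub (int1.sub int2) int3]
    congr 1
    funext x
    simp [hrq]
    ring
  have hz1 : ∫ x in (-1:ℝ)..1, (l (p+1)).eval x * r.eval x = 0 :=
    CB.ortho_low l hdeg horth hnorm r.natDegree r le_rfl (p+1)
      (lt_trans hrdeg (by exact_mod_cast Nat.lt_succ_self p))
  have hz2 : ∫ x in (-1:ℝ)..1, (l p).eval x * r.eval x = 0 :=
    CB.ortho_low l hdeg horth hnorm r.natDegree r le_rfl p hrdeg
  have hz3 : ∫ x in (-1:ℝ)..1, q.eval x * r.eval x = 0 := hperp r hrdeg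
  rw [hz3, intervalIntegral.integral_const_mul, intervalIntegral.integral_const_mul,
    hz1, hz2] at key
  simp at key
  have hr0 : r = 0 := CB.poly_eq_zero_of_integral_sq r key
  refine ⟨a, b, ?_⟩
  have : q - C b * l (p+1) - C a * l p = 0 := by rw [← hrq]; exact hr0
  linear_combination (norm := ring_nf) this

lemma CB.eval_neg_one (l : ℕ → Polynomial ℝ) (hdeg : ∀ k, (l k).natDegree = k)
    (horth : ∀ j k, j ≠ k → ∫ x in (-1:ℝ)..1, (l j).eval x * (l k).eval x = 0)
    (hnorm : ∀ k, (l k).eval 1 = 1) (p : ℕ) :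
    (l p).eval (-1) = (-1 : ℝ)^p := by
  set m : Polynomial ℝ := (l p).comp (-X) with hm
  have hnX : (-X : Polynomial ℝ).natDegree = 1 := by
    rw [Polynomial.natDegree_neg, Polynomial.natDegree_X]
  have hmd : m.natDegree = p := by
    rw [hm, Polynomial.natDegree_comp, hnX, hdeg p, mul_one]
  have hperp : ∀ ψ : Polynomial ℝ, ψ.degree < (p:ℕ) →
      ∫ x in (-1:ℝ)..1, m.eval x * ψ.eval x = 0 := by
    intro ψ hψ
    have hψc : (ψ.comp (-X)).degree < (p:ℕ) := by
      rcases eq_or_ne ψ 0 with rfl | hψ0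
      · simp only [Polynomial.zero_comp, Polynomial.degree_zero]
        exact_mod_cast WithBot.bot_lt_coe p
      · have h1 : (ψ.comp (-X)).natDegree = ψ.natDegree := by
          rw [Polynomial.natDegree_comp, hnX, mul_one]
        have h2 : ψ.natDegree < p := (Polynomial.natDegree_lt_iff_degree_lt hψ0).mpr hψ
        calc (ψ.comp (-X)).degree ≤ ((ψ.comp (-X)).natDegree : WithBot ℕ) :=
              Polynomial.degree_le_natDegree
          _ < (p : ℕ) := by rw [h1]; exact_mod_cast h2
    set g : ℝ → ℝ := fun y => (l p).eval y * (ψ.comp (-X)).eval y with hg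
    have hcn : (∫ x in (-1:ℝ)..1, g (-x)) = ∫ y in (-(1:ℝ))..(-(-1:ℝ)), g y :=
      intervalIntegral.integral_comp_neg g
    calc ∫ x in (-1:ℝ)..1, m.eval x * ψ.eval x
        = ∫ x in (-1:ℝ)..1, g (-x) := by
          congr 1
          funext x
          simp [hg, hm]
      _ = ∫ y in (-(1:ℝ))..(-(-1:ℝ)), g y := hcn
      _ = ∫ y in (-1:ℝ)..1, g y := by norm_num
      _ = 0 := CB.ortho_low l hdeg horth hnorm _ (ψ.comp (-X)) le_rfl p hψc
  obtain ⟨a, b, hab⟩ := CB.decomp l hdeg horth hnorm p m (by omega) hperp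
  have lcp : (l p).coeff p ≠ 0 := by
    have := Polynomial.leadingCoeff_ne_zero.mpr (CB.lne l hnorm p)
    rwa [Polynomial.leadingCoeff, hdeg p] at this
  have lcp1 : (l (p+1)).coeff (p+1) ≠ 0 := by
    have := Polynomial.leadingCoeff_ne_zero.mpr (CB.lne l hnorm (p+1))
    rwa [Polynomial.leadingCoeff, hdeg (p+1)] at this
  have hb : b = 0 := by
    have hc : m.coeff (p+1) = a * (l p).coeff (p+1) + b * (l (p+1)).coeff (p+1) := by
      rw [hab]; simp [Polynomial.coeff_C_mul]
    rw [Polynomial.coeff_eq_zero_of_natDegree_lt (by omega : m.natDegree < p+1),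
      Polynomial.coeff_eq_zero_of_natDegree_lt (by rw [hdeg p]; omega)] at hc
    have h0 : b * (l (p+1)).coeff (p+1) = 0 := by linarith [hc]
    rcases mul_eq_zero.mp h0 with h | h
    · exact h
    · exact absurd h lcp1
  have ha : a = (-1:ℝ)^p := by
    have hlc : m.coeff p = (l p).coeff p * (-1:ℝ)^p := by
      have h1 : m.leadingCoeff = (l p).leadingCoeff * (-X : Polynomial ℝ).leadingCoeff ^ (l p).natDegree :=
        Polynomial.leadingCoeff_comp (by rw [hnX]; omega)
      have h2 : (-X : Polynomial ℝ).leadingCoeff = -1 := by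
        rw [Polynomial.leadingCoeff_neg, Polynomial.leadingCoeff_X]
      rw [Polynomial.leadingCoeff, hmd] at h1
      rw [h1, h2, Polynomial.leadingCoeff, hdeg p]
    have hc : m.coeff p = a * (l p).coeff p + b * (l (p+1)).coeff p := by
      rw [hab]; simp [Polynomial.coeff_C_mul]
    rw [hb, zero_mul, add_zero, hlc] at hc
    have h0 : ((-1:ℝ)^p - a) * (l p).coeff p = 0 := by ring_nf; linarith [hc]
    rcases mul_eq_zero.mp h0 with h | h
    · linarith [h]
    · exact absurd h lcp
  have : m.eval 1 = (l p).eval (-1) := by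
    rw [hm, Polynomial.eval_comp]
    norm_num
  rw [← this, hab, hb, ha]
  simp [hnorm p]

lemma CB.iter_deriv_add (k : ℕ) (q r : Polynomial ℝ) :
    Polynomial.derivative^[k] (q + r)
      = Polynomial.derivative^[k] q + Polynomial.derivative^[k] r := by
  induction k with
  | zero => simp
  | succ k ih => rw [Function.iterate_succ_apply', Function.iterate_succ_apply',
      Function.iterate_succ_apply', ih, Polynomial.derivative_add]

lemma CB.iter_deriv_comp_linear (A B : ℝ) (k : ℕ) (q : Polynomial ℝ) :
    Polynomial.derivative^[k] (q.comp (C A * X + C B))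
      = C (A^k) * (Polynomial.derivative^[k] q).comp (C A * X + C B) := by
  induction k with
  | zero => simp
  | succ k ih =>
      have hsucc : Polynomial.derivative ((⇑Polynomial.derivative)^[k] q)
          = (⇑Polynomial.derivative)^[k+1] q :=
        (Function.iterate_succ_apply' _ k q).symm
      rw [Function.iterate_succ_apply', ih, Polynomial.derivative_C_mul,
        Polynomial.derivative_comp, hsucc]
      have : Polynomial.derivative (C A * X + C B) = C A := by
        simp
      rw [this, pow_succ, Polynomial.C_mul]
      ring

lemma CB.le_biSup (q : Polynomial ℝ) {s : ℝ} (hs : s ∈ Set.Icc (-1:ℝ) 1) :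
    |q.eval s| ≤ ⨆ t ∈ Set.Icc (-1:ℝ) 1, |q.eval t| := by
  obtain ⟨M, hM⟩ := isCompact_Icc.exists_bound_of_continuousOn
    (f := fun t => q.eval t) q.continuous.continuousOn
  have hbdd : BddAbove (Set.range fun t => ⨆ _ : t ∈ Set.Icc (-1:ℝ) 1, |q.eval t|) := by
    refine ⟨max M 0, ?_⟩
    rintro y ⟨t, rfl⟩
    show (⨆ _ : t ∈ Set.Icc (-1:ℝ) 1, |q.eval t|) ≤ max M 0
    by_cases ht : t ∈ Set.Icc (-1:ℝ) 1
    · rw [ciSup_pos (f := fun _ => |q.eval t|) ht]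
      exact le_max_of_le_left (by simpa using hM t ht)
    · haveI : IsEmpty (t ∈ Set.Icc (-1:ℝ) 1) := ⟨ht⟩
      rw [Real.iSup_of_isEmpty]
      exact le_max_right M 0
  calc |q.eval s| = ⨆ _ : s ∈ Set.Icc (-1:ℝ) 1, |q.eval s| := (ciSup_pos (f := fun _ => |q.eval s|) hs).symm
    _ ≤ ⨆ t ∈ Set.Icc (-1:ℝ) 1, |q.eval t| := le_ciSup hbdd s

/-- **Derivative bound for an almost-orthogonal cell polynomial** (the bound underlying
(5.19) of the paper): an `ℝ^d`-valued polynomial `v` of degree `≤ p+1` on the cell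
`I_n = [x_n, x_{n+1}]` of length `h_n` that is `L₂(I_n)`-orthogonal to all polynomials of
degree `≤ p-1` (expressed as `degree < p`) satisfies
`‖∂ₓᵏ v‖_{L∞(I_n)} ≤ 2^{k-1} h_n^{-k} (‖l_p^{(k)}‖_{L∞(-1,1)} + ‖l_{p+1}^{(k)}‖_{L∞(-1,1)})
(|v(x_n)| + |v(x_{n+1})|)`. Here `l k` is characterized as the `k`-th Legendre polynomial
on `(-1,1)` normalized by `l_k(1) = 1`, and `|·|` is the Euclidean norm. -/
theorem cell_orthogonal_derivative_bound
    (l : ℕ → Polynomial ℝ)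
    (hdeg : ∀ k, (l k).natDegree = k)
    (horth : ∀ j k, j ≠ k → ∫ x in (-1:ℝ)..1, (l j).eval x * (l k).eval x = 0)
    (hnorm : ∀ k, (l k).eval 1 = 1)
    (d : ℕ) (hd : 1 ≤ d) (p k : ℕ)
    (xn xnp : ℝ) (hx : xn < xnp)
    (V : Fin d → Polynomial ℝ) (hV : ∀ i, (V i).natDegree ≤ p + 1)
    (horthV : ∀ φ : Fin d → Polynomial ℝ, (∀ i, (φ i).degree < (p : ℕ)) →
      (∫ x in xn..xnp, ∑ i, (V i).eval x * (φ i).eval x) = 0) :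
    ∀ x ∈ Set.Icc xn xnp,
      Real.sqrt (∑ i, ((Polynomial.derivative^[k] (V i)).eval x) ^ 2) ≤
        (2 : ℝ) ^ ((k : ℤ) - 1) * ((xnp - xn) ^ (k : ℤ))⁻¹ *
          ((⨆ s ∈ Set.Icc (-1:ℝ) 1, |(Polynomial.derivative^[k] (l p)).eval s|) +
            ⨆ s ∈ Set.Icc (-1:ℝ) 1, |(Polynomial.derivative^[k] (l (p + 1))).eval s|) *
          (Real.sqrt (∑ i, ((V i).eval xn) ^ 2) + Real.sqrt (∑ i, ((V i).eval xnp) ^ 2)) := by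
  intro x hxm
  classical
  set h : ℝ := xnp - xn with hhdef
  have hh : 0 < h := by rw [hhdef]; linarith
  set c : ℝ := h / 2 with hcdef
  have hcpos : 0 < c := by rw [hcdef]; linarith
  have hc : c ≠ 0 := ne_of_gt hcpos
  set e : ℝ := (xn + xnp) / 2 with hedef
  set f : Polynomial ℝ := C c * X + C e with hfdef
  set g : Polynomial ℝ := C c⁻¹ * X + C (-(e/c)) with hgdef
  have hfev : ∀ y : ℝ, f.eval y = c * y + e := by intro y; rw [hfdef]; simp
  have hgev : ∀ y : ℝ, g.eval y = c⁻¹ * y + (-(e/c)) := by intro y; rw [hgdef]; simp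
  have hgf : ∀ y : ℝ, g.eval (f.eval y) = y := by
    intro y; rw [hfev, hgev]; field_simp; ring
  have hfg : ∀ y : ℝ, f.eval (g.eval y) = y := by
    intro y; rw [hgev, hfev]; field_simp; ring
  set W : Fin d → Polynomial ℝ := fun i => (V i).comp f with hWdef
  have hWev : ∀ (i : Fin d) (y : ℝ), (W i).eval y = (V i).eval (c * y + e) := by
    intro i y; rw [hWdef]; dsimp only; rw [Polynomial.eval_comp, hfev]
  have hWnat : ∀ i, (W i).natDegree ≤ p + 1 := by
    intro i
    rw [hWdef]; dsimp only
    rw [Polynomial.natDegree_comp, hfdef, Polynomial.natDegree_linear hc, mul_one]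
    exact hV i
  have hVW : ∀ i, V i = (W i).comp g := by
    intro i
    apply Polynomial.funext
    intro y
    rw [hWdef]; dsimp only
    rw [Polynomial.eval_comp, Polynomial.eval_comp, hfg]
  -- componentwise orthogonality on the cell
  have hcomp : ∀ (i : Fin d) (ψ : Polynomial ℝ), ψ.degree < (p:ℕ) →
      (∫ y in xn..xnp, (V i).eval y * ψ.eval y) = 0 := by
    intro i ψ hψ
    have hφ : ∀ j : Fin d, ((if j = i then ψ else (0:Polynomial ℝ))).degree < (p:ℕ) := by
      intro j
      by_cases hj : j = i
      · simpa [hj] using hψ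
      · simp only [hj, if_false, Polynomial.degree_zero]
        exact_mod_cast WithBot.bot_lt_coe p
    have hsum : ∀ y : ℝ,
        (∑ j, (V j).eval y * ((if j = i then ψ else (0:Polynomial ℝ))).eval y)
          = (V i).eval y * ψ.eval y := by
      intro y
      rw [Finset.sum_eq_single i]
      · simp
      · intro j _ hj; simp [hj]
      · intro hni; exact absurd (Finset.mem_univ i) hni
    calc (∫ y in xn..xnp, (V i).eval y * ψ.eval y)
        = ∫ y in xn..xnp,
            ∑ j, (V j).eval y * ((if j = i then ψ else (0:Polynomial ℝ))).eval y := by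
          congr 1; funext y; exact (hsum y).symm
      _ = 0 := horthV _ hφ
  -- orthogonality of W on (-1,1)
  have hWperp : ∀ i, ∀ ψ : Polynomial ℝ, ψ.degree < (p:ℕ) →
      (∫ s in (-1:ℝ)..1, (W i).eval s * ψ.eval s) = 0 := by
    intro i ψ hψ
    have hχd : (ψ.comp g).degree < (p:ℕ) := by
      rcases eq_or_ne ψ 0 with rfl | hψ0
      · simp only [Polynomial.zero_comp, Polynomial.degree_zero]
        exact_mod_cast WithBot.bot_lt_coe p
      · have h1 : (ψ.comp g).natDegree = ψ.natDegree := by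
          rw [Polynomial.natDegree_comp, hgdef,
            Polynomial.natDegree_linear (inv_ne_zero hc), mul_one]
        have h2 : ψ.natDegree < p := (Polynomial.natDegree_lt_iff_degree_lt hψ0).mpr hψ
        calc (ψ.comp g).degree ≤ ((ψ.comp g).natDegree : WithBot ℕ) :=
              Polynomial.degree_le_natDegree
          _ < (p:ℕ) := by rw [h1]; exact_mod_cast h2
    set F : ℝ → ℝ := fun y => (V i).eval y * (ψ.comp g).eval y with hF
    have hsub : (∫ s in (-1:ℝ)..1, F (c * s + e))
        = c⁻¹ • ∫ y in (c * (-1) + e)..(c * 1 + e), F y :=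
      intervalIntegral.integral_comp_mul_add F hc e
    have hb1 : c * (-1) + e = xn := by rw [hcdef, hedef, hhdef]; ring
    have hb2 : c * 1 + e = xnp := by rw [hcdef, hedef, hhdef]; ring
    calc (∫ s in (-1:ℝ)..1, (W i).eval s * ψ.eval s)
        = ∫ s in (-1:ℝ)..1, F (c * s + e) := by
          congr 1
          funext s
          rw [hF]; dsimp only
          rw [hWev i s, Polynomial.eval_comp]
          have hgs : g.eval (c * s + e) = s := by rw [← hfev s, hgf s]
          rw [hgs]
      _ = c⁻¹ • ∫ y in (c * (-1) + e)..(c * 1 + e), F y := hsub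
      _ = c⁻¹ • ∫ y in xn..xnp, F y := by rw [hb1, hb2]
      _ = 0 := by
          rw [hF]
          rw [hcomp i (ψ.comp g) hχd, smul_zero]
  choose A B hAB using fun i => CB.decomp l hdeg horth hnorm p (W i) (hWnat i) (hWperp i)
  -- endpoint identities
  have hfe1 : c * 1 + e = xnp := by rw [hcdef, hedef, hhdef]; ring
  have hfem1 : c * (-1) + e = xn := by rw [hcdef, hedef, hhdef]; ring
  have hWval1 : ∀ i, (V i).eval xnp = A i + B i := by
    intro i
    have h1 : (W i).eval 1 = (V i).eval xnp := by rw [hWev, hfe1]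
    rw [← h1, hAB i]
    simp [hnorm p, hnorm (p+1)]
  have hlneg := CB.eval_neg_one l hdeg horth hnorm
  have hWvalm1 : ∀ i, (V i).eval xn = A i * (-1:ℝ)^p + B i * (-1:ℝ)^(p+1) := by
    intro i
    have h1 : (W i).eval (-1) = (V i).eval xn := by rw [hWev, hfem1]
    rw [← h1, hAB i]
    simp [hlneg p, hlneg (p+1)]
  have hsq : ((-1:ℝ)^p) * ((-1:ℝ)^p) = 1 := by
    rw [← pow_add, ← two_mul, pow_mul]
    norm_num
  -- derivative formulas
  have hWd : ∀ i, Polynomial.derivative^[k] (V i)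
      = C ((c⁻¹)^k) * ((Polynomial.derivative^[k] (W i)).comp g) := by
    intro i
    rw [hVW i, hgdef]
    exact CB.iter_deriv_comp_linear c⁻¹ (-(e/c)) k (W i)
  have hWk : ∀ i, Polynomial.derivative^[k] (W i)
      = C (A i) * Polynomial.derivative^[k] (l p)
        + C (B i) * Polynomial.derivative^[k] (l (p+1)) := by
    intro i
    rw [hAB i, CB.iter_deriv_add, Polynomial.iterate_derivative_C_mul,
      Polynomial.iterate_derivative_C_mul]
  -- the point s in [-1,1]
  set s : ℝ := c⁻¹ * x + (-(e/c)) with hsdef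
  have hgx : g.eval x = s := hgev x
  have hs1 : s = (x - e)/c := by rw [hsdef]; ring
  have hs : s ∈ Set.Icc (-1:ℝ) 1 := by
    rw [hs1]
    constructor
    · rw [le_div_iff₀ hcpos, hcdef, hedef, hhdef]
      linarith [hxm.1]
    · rw [div_le_iff₀ hcpos, hcdef, hedef, hhdef]
      linarith [hxm.2]
  set LA : ℝ := (Polynomial.derivative^[k] (l p)).eval s with hLA
  set LB : ℝ := (Polynomial.derivative^[k] (l (p+1))).eval s with hLB
  have heval : ∀ i, (Polynomial.derivative^[k] (V i)).eval x
      = (c⁻¹)^k * (A i * LA + B i * LB) := by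
    intro i
    rw [hWd i, Polynomial.eval_mul, Polynomial.eval_C, Polynomial.eval_comp, hgx, hWk i]
    simp [hLA, hLB]
  -- euclidean space vectors
  set u : EuclideanSpace ℝ (Fin d) := WithLp.toLp 2 (fun i => A i) with hu
  set v : EuclideanSpace ℝ (Fin d) := WithLp.toLp 2 (fun i => B i) with hv
  set wa : EuclideanSpace ℝ (Fin d) := WithLp.toLp 2 (fun i => (V i).eval xn) with hwa
  set wb : EuclideanSpace ℝ (Fin d) := WithLp.toLp 2 (fun i => (V i).eval xnp) with hwb
  have hnorm_gen : ∀ z : EuclideanSpace ℝ (Fin d),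
      Real.sqrt (∑ i, (z i)^2) = ‖z‖ := by
    intro z
    rw [EuclideanSpace.norm_eq]
    congr 1
    refine Finset.sum_congr rfl fun i _ => ?_
    rw [Real.norm_eq_abs, sq_abs]
  have hAi : ∀ i, A i = (wb i + (-1:ℝ)^p * wa i)/2 := by
    intro i
    have e1 := hWval1 i
    have e2 := hWvalm1 i
    rw [pow_succ] at e2
    have hwbi : wb i = (V i).eval xnp := rfl
    have hwai : wa i = (V i).eval xn := rfl
    rw [hwbi, hwai, e1, e2]
    field_simp
    linear_combination (B i - A i) * hsq
  have hBi : ∀ i, B i = (wb i - (-1:ℝ)^p * wa i)/2 := by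
    intro i
    have e1 := hWval1 i
    have e2 := hWvalm1 i
    rw [pow_succ] at e2
    have hwbi : wb i = (V i).eval xnp := rfl
    have hwai : wa i = (V i).eval xn := rfl
    rw [hwbi, hwai, e1, e2]
    field_simp
    linear_combination (A i - B i) * hsq
  have hnegone : ‖((-1:ℝ)^p) • wa‖ = ‖wa‖ := by
    rw [norm_smul, Real.norm_eq_abs, abs_pow, abs_neg, abs_one, one_pow, one_mul]
  have hun : ‖u‖ ≤ (‖wa‖ + ‖wb‖)/2 := by
    have hu2 : u = (2⁻¹ : ℝ) • (wb + ((-1:ℝ)^p) • wa) := by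
      ext i
      show A i = 2⁻¹ * (wb i + (-1:ℝ)^p * wa i)
      rw [hAi i]; ring
    rw [hu2, norm_smul]
    calc ‖(2⁻¹:ℝ)‖ * ‖wb + ((-1:ℝ)^p) • wa‖
        ≤ 2⁻¹ * (‖wb‖ + ‖((-1:ℝ)^p) • wa‖) := by
          rw [Real.norm_eq_abs, abs_of_nonneg (by norm_num : (0:ℝ) ≤ (2⁻¹:ℝ))]
          have := norm_add_le wb (((-1:ℝ)^p) • wa)
          linarith
      _ = (‖wa‖ + ‖wb‖)/2 := by rw [hnegone]; ring
  have hvn : ‖v‖ ≤ (‖wa‖ + ‖wb‖)/2 := by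
    have hv2 : v = (2⁻¹ : ℝ) • (wb - ((-1:ℝ)^p) • wa) := by
      ext i
      show B i = 2⁻¹ * (wb i - (-1:ℝ)^p * wa i)
      rw [hBi i]; ring
    rw [hv2, norm_smul]
    calc ‖(2⁻¹:ℝ)‖ * ‖wb - ((-1:ℝ)^p) • wa‖
        ≤ 2⁻¹ * (‖wb‖ + ‖((-1:ℝ)^p) • wa‖) := by
          rw [Real.norm_eq_abs, abs_of_nonneg (by norm_num : (0:ℝ) ≤ (2⁻¹:ℝ))]
          have := norm_sub_le wb (((-1:ℝ)^p) • wa)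
          linarith
      _ = (‖wa‖ + ‖wb‖)/2 := by rw [hnegone]; ring
  -- sup bounds
  have hMA : |LA| ≤ ⨆ t ∈ Set.Icc (-1:ℝ) 1, |(Polynomial.derivative^[k] (l p)).eval t| :=
    CB.le_biSup _ hs
  have hMB : |LB| ≤ ⨆ t ∈ Set.Icc (-1:ℝ) 1, |(Polynomial.derivative^[k] (l (p+1))).eval t| :=
    CB.le_biSup _ hs
  set MA : ℝ := ⨆ t ∈ Set.Icc (-1:ℝ) 1, |(Polynomial.derivative^[k] (l p)).eval t| with hMAdef
  set MB : ℝ := ⨆ t ∈ Set.Icc (-1:ℝ) 1, |(Polynomial.derivative^[k] (l (p+1))).eval t| with hMBdef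
  have hMAnn : 0 ≤ MA := le_trans (abs_nonneg _) hMA
  have hMBnn : 0 ≤ MB := le_trans (abs_nonneg _) hMB
  -- the vector z
  set z : EuclideanSpace ℝ (Fin d) := WithLp.toLp 2 (fun i => (Polynomial.derivative^[k] (V i)).eval x) with hz
  have hzeq : z = ((c⁻¹)^k) • (LA • u + LB • v) := by
    ext i
    show (Polynomial.derivative^[k] (V i)).eval x = (c⁻¹)^k * (LA * u i + LB * v i)
    rw [heval i]
    have : u i = A i := rfl
    have : v i = B i := rfl
    ring_nf
    rw [‹u i = A i›, ‹v i = B i›]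
    ring
  have hcink : (0:ℝ) ≤ (c⁻¹)^k := by positivity
  have key : Real.sqrt (∑ i, ((Polynomial.derivative^[k] (V i)).eval x) ^ 2)
      ≤ (c⁻¹)^k * (MA * ((‖wa‖ + ‖wb‖)/2) + MB * ((‖wa‖ + ‖wb‖)/2)) := by
    have h1 : Real.sqrt (∑ i, ((Polynomial.derivative^[k] (V i)).eval x) ^ 2) = ‖z‖ :=
      hnorm_gen z
    rw [h1, hzeq, norm_smul, Real.norm_eq_abs, abs_of_nonneg hcink]
    have h2 : ‖LA • u + LB • v‖ ≤ |LA| * ‖u‖ + |LB| * ‖v‖ := by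
      calc ‖LA • u + LB • v‖ ≤ ‖LA • u‖ + ‖LB • v‖ := norm_add_le _ _
        _ = |LA| * ‖u‖ + |LB| * ‖v‖ := by rw [norm_smul, norm_smul,
            Real.norm_eq_abs, Real.norm_eq_abs]
    have h3 : |LA| * ‖u‖ + |LB| * ‖v‖ ≤ MA * ((‖wa‖ + ‖wb‖)/2) + MB * ((‖wa‖ + ‖wb‖)/2) :=
      add_le_add (mul_le_mul hMA hun (norm_nonneg _) hMAnn)
        (mul_le_mul hMB hvn (norm_nonneg _) hMBnn)
    calc (c⁻¹)^k * ‖LA • u + LB • v‖ ≤ (c⁻¹)^k * (|LA| * ‖u‖ + |LB| * ‖v‖) :=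
          mul_le_mul_of_nonneg_left h2 hcink
      _ ≤ (c⁻¹)^k * (MA * ((‖wa‖ + ‖wb‖)/2) + MB * ((‖wa‖ + ‖wb‖)/2)) :=
          mul_le_mul_of_nonneg_left h3 hcink
  -- rewrite RHS of the goal
  have hwaeq : Real.sqrt (∑ i, ((V i).eval xn) ^ 2) = ‖wa‖ := hnorm_gen wa
  have hwbeq : Real.sqrt (∑ i, ((V i).eval xnp) ^ 2) = ‖wb‖ := hnorm_gen wb
  rw [hwaeq, hwbeq]
  refine le_trans key (le_of_eq ?_)
  have hz2 : (2:ℝ)^((k:ℤ)-1) = 2^k / 2 := by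
    rw [zpow_sub₀ (two_ne_zero), zpow_natCast, zpow_one]
  have hz3 : ((h:ℝ)^(k:ℤ))⁻¹ = (h^k)⁻¹ := by rw [zpow_natCast]
  rw [hz2, hz3]
  have hci : c⁻¹ = 2/h := by rw [hcdef]; field_simp
  rw [hci, div_pow]
  have hhk : (h:ℝ)^k ≠ 0 := pow_ne_zero _ (ne_of_gt hh)
  field_simp
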